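/- Fix positive integers ℓ, n with ⟨v²⟩/(H²)-ratio m = ℓ/n, and let NS be a lattice of signature (1, ρ−1). Set Q_ℓ := {ξ ∈ NS⊗ℝ : (ξ²) = 2ℓ} and, for m ∈ ℚ_{>0}, Q_{ℓ,m} := {ξ ∈ √m · (NS⊗ℚ) : (ξ²) = 2ℓ}. Then every nonempty Q_{ℓ,m} is dense in Q_ℓ: explicitly, if ξ₀ ∈ Q_{ℓ,m} and η₀ = ξ₀/√m, then every element of Q_{ℓ,m} near a given point of Q_ℓ can be written √m(η₀ − 2((η₀,u)/(u²))·u) for suitable u ∈ NS⊗ℚ with (u²) ≠ 0, and these reflections of η₀ are dense in Q_ℓ. -/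

import Mathlib

open Matrix

open Finset Filter Topology

namespace QlmAux

variable {ρ : ℕ}

def B (G : Matrix (Fin ρ) (Fin ρ) ℚ) (x y : Fin ρ → ℝ) : ℝ :=
  ∑ i, ∑ j, (G i j : ℝ) * x i * y j

def Bq (G : Matrix (Fin ρ) (Fin ρ) ℚ) (x y : Fin ρ → ℚ) : ℚ :=
  ∑ i, ∑ j, G i j * x i * y j

lemma B_cast (G : Matrix (Fin ρ) (Fin ρ) ℚ) (x y : Fin ρ → ℚ) :
    B G (fun i => (x i : ℝ)) (fun i => (y i : ℝ)) = ((Bq G x y : ℚ) : ℝ) := by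
  unfold B Bq; push_cast; rfl

lemma B_symm {G : Matrix (Fin ρ) (Fin ρ) ℚ} (hG : G.IsSymm) (x y : Fin ρ → ℝ) :
    B G x y = B G y x := by
  unfold B
  rw [Finset.sum_comm]
  refine Finset.sum_congr rfl fun i _ => Finset.sum_congr rfl fun j _ => ?_
  rw [← hG.apply i j]
  ring

lemma B_smul_left (G : Matrix (Fin ρ) (Fin ρ) ℚ) (s : ℝ) (x y : Fin ρ → ℝ) :
    B G (fun i => s * x i) y = s * B G x y := by
  unfold B
  rw [Finset.mul_sum]
  refine Finset.sum_congr rfl fun i _ => ?_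
  rw [Finset.mul_sum]
  refine Finset.sum_congr rfl fun j _ => by ring

lemma B_smul_right (G : Matrix (Fin ρ) (Fin ρ) ℚ) (s : ℝ) (x y : Fin ρ → ℝ) :
    B G x (fun i => s * y i) = s * B G x y := by
  unfold B
  rw [Finset.mul_sum]
  refine Finset.sum_congr rfl fun i _ => ?_
  rw [Finset.mul_sum]
  refine Finset.sum_congr rfl fun j _ => by ring

lemma B_sub_right (G : Matrix (Fin ρ) (Fin ρ) ℚ) (x y z : Fin ρ → ℝ) :
    B G x (fun i => y i - z i) = B G x y - B G x z := by
  unfold B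
  rw [← Finset.sum_sub_distrib]
  refine Finset.sum_congr rfl fun i _ => ?_
  rw [← Finset.sum_sub_distrib]
  refine Finset.sum_congr rfl fun j _ => by ring

lemma B_sub_smul {G : Matrix (Fin ρ) (Fin ρ) ℚ} (hG : G.IsSymm)
    (a u : Fin ρ → ℝ) (c : ℝ) :
    B G (fun i => a i - c * u i) (fun i => a i - c * u i)
      = B G a a - 2 * c * B G a u + c ^ 2 * B G u u := by
  have h1 : B G (fun i => a i - c * u i) (fun i => a i - c * u i)
      = B G a a - c * B G a u - c * B G u a + c * c * B G u u := by
    unfold B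
    simp only [Finset.mul_sum, ← Finset.sum_sub_distrib, ← Finset.sum_add_distrib]
    exact Finset.sum_congr rfl fun i _ => Finset.sum_congr rfl fun j _ => by ring
  rw [h1, B_symm hG u a]; ring


lemma B_eq_dot (G : Matrix (Fin ρ) (Fin ρ) ℚ) (x y : Fin ρ → ℝ) :
    B G x y = x ⬝ᵥ ((G.map (fun q : ℚ => (q : ℝ))) *ᵥ y) := by
  unfold B
  simp only [dotProduct, mulVec, Matrix.map_apply, Finset.mul_sum]
  exact Finset.sum_congr rfl fun i _ => Finset.sum_congr rfl fun j _ => by ring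

lemma B_diag {G : Matrix (Fin ρ) (Fin ρ) ℚ} {P : Matrix (Fin ρ) (Fin ρ) ℝ}
    {d : Fin ρ → ℝ}
    (hP : Pᵀ * (G.map (fun q : ℚ => (q : ℝ))) * P = Matrix.diagonal d)
    (α β : Fin ρ → ℝ) :
    B G (P *ᵥ α) (P *ᵥ β) = ∑ i, d i * α i * β i := by
  rw [B_eq_dot]
  rw [Matrix.mulVec_mulVec, ← Matrix.vecMul_transpose, Matrix.dotProduct_mulVec,
    Matrix.vecMul_vecMul, ← Matrix.mul_assoc, hP]
  simp only [dotProduct, Matrix.vecMul_diagonal]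
  exact Finset.sum_congr rfl fun i _ => by ring


lemma split_sum (hρ : 2 ≤ ρ) (γ δ : Fin ρ → ℝ) :
    ∑ i : Fin ρ, (if (i : ℕ) = 0 then (1:ℝ) else -1) * γ i * δ i
      = γ ⟨0, by omega⟩ * δ ⟨0, by omega⟩
        - ∑ i ∈ Finset.univ.erase ⟨0, by omega⟩, γ i * δ i := by
  set i0 : Fin ρ := ⟨0, by omega⟩ with hi0
  rw [← Finset.add_sum_erase _ _ (Finset.mem_univ i0)]
  have h0 : ((i0 : Fin ρ) : ℕ) = 0 := rfl
  rw [sub_eq_add_neg, ← Finset.sum_neg_distrib]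
  congr 1
  · simp [h0]
  · refine Finset.sum_congr rfl fun i hi => ?_
    have : ((i : Fin ρ) : ℕ) ≠ 0 := by
      intro h
      exact (Finset.mem_erase.mp hi).1 (Fin.ext h)
    simp [this]

lemma mink (hρ : 2 ≤ ρ) {G : Matrix (Fin ρ) (Fin ρ) ℚ}
    (hsig : ∃ P : Matrix (Fin ρ) (Fin ρ) ℝ, IsUnit P.det ∧
      Pᵀ * (G.map (fun q : ℚ => (q : ℝ))) * P =
        Matrix.diagonal (fun i : Fin ρ => if (i : ℕ) = 0 then (1 : ℝ) else -1))
    (a u : Fin ρ → ℝ) (ha : 0 < B G a a) (hu : B G u u = 0) (hau : B G a u = 0) :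
    ∀ i, u i = 0 := by
  obtain ⟨P, hPdet, hP⟩ := hsig
  set i0 : Fin ρ := ⟨0, by omega⟩ with hi0
  set α := P⁻¹ *ᵥ a with hα
  set β := P⁻¹ *ᵥ u with hβ
  have hPa : P *ᵥ α = a := by
    rw [hα, Matrix.mulVec_mulVec, Matrix.mul_nonsing_inv _ hPdet, Matrix.one_mulVec]
  have hPu : P *ᵥ β = u := by
    rw [hβ, Matrix.mulVec_mulVec, Matrix.mul_nonsing_inv _ hPdet, Matrix.one_mulVec]
  have haa := B_diag hP α α
  have huu := B_diag hP β β
  have hab := B_diag hP α β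
  rw [hPa] at haa hab
  rw [hPu] at huu hab
  rw [split_sum hρ] at haa huu hab
  rw [haa] at ha; rw [huu] at hu; rw [hab] at hau
  set E := Finset.univ.erase i0 with hE
  have csq := Finset.sum_mul_sq_le_sq_mul_sq E α β
  have hsq : ∀ γ : Fin ρ → ℝ, ∑ i ∈ E, γ i ^ 2 = ∑ i ∈ E, γ i * γ i :=
    fun γ => Finset.sum_congr rfl fun i _ => sq (γ i)
  rw [hsq, hsq] at csq
  have hsab : (∑ i ∈ E, α i * β i) = α i0 * β i0 := by linarith
  have hsb' : (∑ i ∈ E, β i * β i) = β i0 * β i0 := by linarith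
  rw [hsab, hsb'] at csq
  have hsaa : 0 ≤ ∑ i ∈ E, α i * α i :=
    Finset.sum_nonneg fun i _ => mul_self_nonneg _
  have hsbb : 0 ≤ ∑ i ∈ E, β i * β i :=
    Finset.sum_nonneg fun i _ => mul_self_nonneg _
  have hb0 : β i0 = 0 := by
    by_contra hb
    nlinarith [mul_pos ha (mul_self_pos.mpr hb), csq]
  have hbE : ∀ i ∈ E, β i = 0 := by
    have hz : ∑ i ∈ E, β i * β i = 0 := by rw [hsb', hb0]; ring
    intro i hi
    have := (Finset.sum_eq_zero_iff_of_nonneg (fun j _ => mul_self_nonneg (β j))).mp hz i hi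
    exact mul_self_eq_zero.mp this
  have hball : ∀ i, β i = 0 := by
    intro i
    by_cases h : i = i0
    · rw [h]; exact hb0
    · exact hbE i (Finset.mem_erase.mpr ⟨h, Finset.mem_univ i⟩)
  intro i
  rw [← hPu]
  have : β = fun _ => (0:ℝ) := funext hball
  rw [this]
  simp [Matrix.mulVec]


lemma B_cont_diag (G : Matrix (Fin ρ) (Fin ρ) ℚ) :
    Continuous fun v : Fin ρ → ℝ => B G v v := by
  unfold B
  refine continuous_finset_sum _ fun i _ => continuous_finset_sum _ fun j _ => ?_
  exact (continuous_const.mul (continuous_apply i)).mul (continuous_apply j)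

lemma B_cont_right (G : Matrix (Fin ρ) (Fin ρ) ℚ) (a : Fin ρ → ℝ) :
    Continuous fun v : Fin ρ → ℝ => B G a v := by
  unfold B
  refine continuous_finset_sum _ fun i _ => continuous_finset_sum _ fun j _ => ?_
  exact continuous_const.mul (continuous_apply j)

lemma rat_approx (w : ℝ) :
    Tendsto (fun k : ℕ => (((((round (((k : ℝ) + 1) * w) : ℤ) : ℚ) / ((k : ℚ) + 1)) : ℚ) : ℝ))
      atTop (𝓝 w) := by
  rw [tendsto_iff_dist_tendsto_zero]
  refine squeeze_zero (fun k => dist_nonneg) (fun k => ?_) tendsto_one_div_add_atTop_nhds_zero_nat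
  have hk : (0 : ℝ) < (k : ℝ) + 1 := by positivity
  rw [Real.dist_eq]
  have hcast : ((((round (((k : ℝ) + 1) * w) : ℤ) : ℚ) / ((k : ℚ) + 1) : ℚ) : ℝ)
      = ((round (((k : ℝ) + 1) * w) : ℤ) : ℝ) / ((k : ℝ) + 1) := by push_cast; ring
  rw [hcast]
  set t : ℝ := ((k : ℝ) + 1) * w with ht
  have hw : w = t / ((k : ℝ) + 1) := by field_simp [ht]; rw [ht]; ring
  rw [hw, div_sub_div_same, abs_div, abs_of_pos hk]
  rw [div_le_div_iff₀ hk hk]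
  have h2 : |(round t : ℝ) - t| ≤ 1 / 2 := by
    have := abs_sub_round t
    rw [abs_sub_comm] at this
    exact this
  nlinarith [abs_nonneg ((round t : ℝ) - t)]

end QlmAux

open QlmAux

/-- on `NS ⊗ ℝ` (modelled as `Fin ρ → ℝ` with a rational
symmetric form of signature `(1, ρ−1)`), the set
`Q_{ℓ,m} = {ξ ∈ √m·(NS⊗ℚ) : (ξ²) = 2ℓ}`, when nonempty (containing `ξ₀`),
is dense in `Q_ℓ = {ξ : (ξ²) = 2ℓ}`; moreover every element of `Q_{ℓ,m}` is
either `ξ₀` or a reflection `√m(η₀ − 2((η₀,u)/(u²))·u)` of `η₀ = ξ₀/√m`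
for some rational `u` with `(u²) ≠ 0`. -/
theorem Qlm_dense_in_Ql
    (ρ : ℕ) (hρ : 2 ≤ ρ)
    (G : Matrix (Fin ρ) (Fin ρ) ℚ) (hGsymm : G.IsSymm)
    (hsig : ∃ P : Matrix (Fin ρ) (Fin ρ) ℝ, IsUnit P.det ∧
      Pᵀ * (G.map (fun q : ℚ => (q : ℝ))) * P =
        Matrix.diagonal (fun i : Fin ρ => if (i : ℕ) = 0 then (1 : ℝ) else -1))
    (ℓ : ℤ) (hℓ : 0 < ℓ) (m : ℚ) (hm : 0 < m)
    (ipR : (Fin ρ → ℝ) → (Fin ρ → ℝ) → ℝ)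
    (hipR : ∀ x y : Fin ρ → ℝ, ipR x y = ∑ i, ∑ j, (G i j : ℝ) * x i * y j)
    (ξ₀ : Fin ρ → ℝ) (x₀ : Fin ρ → ℚ)
    (hξ₀ : ξ₀ = fun i => Real.sqrt (m : ℝ) * (x₀ i : ℝ))
    (hξ₀sq : ipR ξ₀ ξ₀ = 2 * (ℓ : ℝ)) :
    (∀ ξ : Fin ρ → ℝ, ipR ξ ξ = 2 * (ℓ : ℝ) →
      (∃ x : Fin ρ → ℚ, ξ = fun i => Real.sqrt (m : ℝ) * (x i : ℝ)) →
      ξ = ξ₀ ∨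
        ∃ u : Fin ρ → ℚ,
          ipR (fun j => (u j : ℝ)) (fun j => (u j : ℝ)) ≠ 0 ∧
          ξ = fun i => Real.sqrt (m : ℝ) *
            ((x₀ i : ℝ) -
              2 * (ipR (fun j => (x₀ j : ℝ)) (fun j => (u j : ℝ)) /
                   ipR (fun j => (u j : ℝ)) (fun j => (u j : ℝ))) * (u i : ℝ))) ∧
    (∀ ξ : Fin ρ → ℝ, ipR ξ ξ = 2 * (ℓ : ℝ) →
      ξ ∈ closure {ζ : Fin ρ → ℝ |
        (∃ x : Fin ρ → ℚ, ζ = fun i => Real.sqrt (m : ℝ) * (x i : ℝ)) ∧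
        ipR ζ ζ = 2 * (ℓ : ℝ)}) := by
  have hB : ∀ x y, ipR x y = B G x y := hipR
  have hmR : (0:ℝ) < (m:ℝ) := by exact_mod_cast hm
  have hsm2 : Real.sqrt (m:ℝ) * Real.sqrt (m:ℝ) = (m:ℝ) := Real.mul_self_sqrt hmR.le
  have hℓR : (0:ℝ) < 2 * (ℓ:ℝ) := by
    have : (0:ℝ) < (ℓ:ℝ) := by exact_mod_cast hℓ
    linarith
  have hBx₀m : (m : ℝ) * B G (fun i => (x₀ i : ℝ)) (fun i => (x₀ i : ℝ)) = 2 * (ℓ:ℝ) := by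
    rw [hB, hξ₀] at hξ₀sq
    rw [QlmAux.B_smul_left, QlmAux.B_smul_right, ← mul_assoc, hsm2] at hξ₀sq
    exact hξ₀sq
  have hBx₀pos : 0 < B G (fun i => (x₀ i : ℝ)) (fun i => (x₀ i : ℝ)) := by nlinarith
  constructor
  · -- Part 1
    rintro ξ hq ⟨x, hx⟩
    have hBxm : (m : ℝ) * B G (fun i => (x i : ℝ)) (fun i => (x i : ℝ)) = 2 * (ℓ:ℝ) := by
      rw [hB, hx] at hq
      rw [QlmAux.B_smul_left, QlmAux.B_smul_right, ← mul_assoc, hsm2] at hq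
      exact hq
    have hBxx : B G (fun i => (x i : ℝ)) (fun i => (x i : ℝ))
        = B G (fun i => (x₀ i : ℝ)) (fun i => (x₀ i : ℝ)) :=
      mul_left_cancel₀ (ne_of_gt hmR) (hBxm.trans hBx₀m.symm)
    by_cases hxeq : x = x₀
    · left; rw [hx, hξ₀, hxeq]
    · right
      have huRe : (fun j => ((x₀ j - x j : ℚ) : ℝ))
          = fun j => (x₀ j : ℝ) - (x j : ℝ) := by
        funext j; push_cast; ring
      have hBuu : B G (fun j => ((x₀ j - x j : ℚ) : ℝ)) (fun j => ((x₀ j - x j : ℚ) : ℝ))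
          = 2 * (B G (fun i => (x₀ i : ℝ)) (fun i => (x₀ i : ℝ))
              - B G (fun i => (x₀ i : ℝ)) (fun i => (x i : ℝ))) := by
        rw [huRe]
        have h := QlmAux.B_sub_smul hGsymm (fun i => (x₀ i : ℝ)) (fun i => (x i : ℝ)) 1
        simp only [one_mul, one_pow] at h
        rw [h, hBxx]
        ring
      have hBx₀u : B G (fun i => (x₀ i : ℝ)) (fun j => ((x₀ j - x j : ℚ) : ℝ))
          = B G (fun i => (x₀ i : ℝ)) (fun i => (x₀ i : ℝ))
            - B G (fun i => (x₀ i : ℝ)) (fun i => (x i : ℝ)) := by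
        rw [huRe]
        exact QlmAux.B_sub_right G _ _ _
      have hBuu2 : B G (fun j => ((x₀ j - x j : ℚ) : ℝ)) (fun j => ((x₀ j - x j : ℚ) : ℝ))
          = 2 * B G (fun i => (x₀ i : ℝ)) (fun j => ((x₀ j - x j : ℚ) : ℝ)) := by
        rw [hBx₀u, hBuu]
      have hBuune : B G (fun j => ((x₀ j - x j : ℚ) : ℝ)) (fun j => ((x₀ j - x j : ℚ) : ℝ)) ≠ 0 := by
        intro h0
        have hzu : B G (fun i => (x₀ i : ℝ)) (fun j => ((x₀ j - x j : ℚ) : ℝ)) = 0 := by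
          rw [hBuu2] at h0; linarith
        have hz := QlmAux.mink hρ hsig (fun i => (x₀ i : ℝ)) (fun j => ((x₀ j - x j : ℚ) : ℝ))
          hBx₀pos h0 hzu
        apply hxeq
        funext i
        have h2 : ((x₀ i - x i : ℚ) : ℝ) = 0 := hz i
        have : (x₀ i - x i : ℚ) = 0 := by exact_mod_cast h2
        linarith [this]
      have hratio : 2 * (B G (fun i => (x₀ i : ℝ)) (fun j => ((x₀ j - x j : ℚ) : ℝ))
          / B G (fun j => ((x₀ j - x j : ℚ) : ℝ)) (fun j => ((x₀ j - x j : ℚ) : ℝ))) = 1 := by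
        rw [hBuu2]
        rw [← mul_div_assoc]
        exact div_self (by rw [← hBuu2]; exact hBuune)
      refine ⟨fun i => x₀ i - x i, ?_, ?_⟩
      · rw [hB]; exact hBuune
      · have e1 : ipR (fun j => (x₀ j : ℝ)) (fun j => (((fun i => x₀ i - x i) j : ℚ) : ℝ))
            = B G (fun i => (x₀ i : ℝ)) (fun j => ((x₀ j - x j : ℚ) : ℝ)) := hB _ _
        have e2 : ipR (fun j => (((fun i => x₀ i - x i) j : ℚ) : ℝ))
              (fun j => (((fun i => x₀ i - x i) j : ℚ) : ℝ))
            = B G (fun j => ((x₀ j - x j : ℚ) : ℝ)) (fun j => ((x₀ j - x j : ℚ) : ℝ)) := hB _ _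
        rw [e1, e2, hratio, hx]
        funext i
        push_cast
        ring
  · -- Part 2
    intro ξ hq
    by_cases hxe : ξ = ξ₀
    · rw [hxe]
      exact subset_closure ⟨⟨x₀, hξ₀⟩, hξ₀sq⟩
    · have hBξ : B G ξ ξ = 2 * (ℓ:ℝ) := by rw [← hB]; exact hq
      have hBξ₀ : B G ξ₀ ξ₀ = 2 * (ℓ:ℝ) := by rw [← hB]; exact hξ₀sq
      have hwexp : B G (fun i => ξ i - ξ₀ i) (fun i => ξ i - ξ₀ i)
          = B G ξ ξ - 2 * B G ξ ξ₀ + B G ξ₀ ξ₀ := by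
        have h := QlmAux.B_sub_smul hGsymm ξ ξ₀ 1
        simp only [one_mul, one_pow, mul_one] at h
        exact h
      have hwx₀ : B G ξ₀ (fun i => ξ i - ξ₀ i) = B G ξ₀ ξ - B G ξ₀ ξ₀ :=
        QlmAux.B_sub_right G ξ₀ ξ ξ₀
      have hkey : B G (fun i => ξ i - ξ₀ i) (fun i => ξ i - ξ₀ i)
          = -2 * B G ξ₀ (fun i => ξ i - ξ₀ i) := by
        rw [hwexp, hwx₀, QlmAux.B_symm hGsymm ξ ξ₀]
        rw [hBξ, hBξ₀]
        ring
      have hBww : B G (fun i => ξ i - ξ₀ i) (fun i => ξ i - ξ₀ i) ≠ 0 := by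
        intro h0
        have h1 : B G ξ₀ (fun i => ξ i - ξ₀ i) = 0 := by
          rw [hkey] at h0; linarith
        have hpos : 0 < B G ξ₀ ξ₀ := by rw [hBξ₀]; exact hℓR
        have hz := QlmAux.mink hρ hsig ξ₀ (fun i => ξ i - ξ₀ i) hpos h0 h1
        apply hxe
        funext i
        have := hz i
        simp only [sub_eq_zero] at this
        exact this
      have hBξ₀w : B G ξ₀ (fun i => ξ i - ξ₀ i) ≠ 0 := by
        intro h; apply hBww; rw [hkey, h]; ring
      set u : ℕ → Fin ρ → ℚ :=
        fun k i => ((round (((k : ℝ) + 1) * (ξ i - ξ₀ i)) : ℤ) : ℚ) / ((k : ℚ) + 1) with hud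
      set uR : ℕ → Fin ρ → ℝ := fun k i => ((u k i : ℚ) : ℝ) with huRd
      have hti : ∀ i, Tendsto (fun k => uR k i) atTop (𝓝 (ξ i - ξ₀ i)) :=
        fun i => QlmAux.rat_approx (ξ i - ξ₀ i)
      have htend : Tendsto uR atTop (𝓝 (fun i => ξ i - ξ₀ i)) := tendsto_pi_nhds.mpr hti
      have hc1 : Tendsto (fun k => B G (uR k) (uR k)) atTop
          (𝓝 (B G (fun i => ξ i - ξ₀ i) (fun i => ξ i - ξ₀ i))) :=
        ((QlmAux.B_cont_diag G).tendsto _).comp htend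
      have hc2 : Tendsto (fun k => B G ξ₀ (uR k)) atTop
          (𝓝 (B G ξ₀ (fun i => ξ i - ξ₀ i))) :=
        ((QlmAux.B_cont_right G ξ₀).tendsto _).comp htend
      have hev : ∀ᶠ k in atTop, B G (uR k) (uR k) ≠ 0 := hc1.eventually_ne hBww
      set F : ℕ → Fin ρ → ℝ :=
        fun k i => ξ₀ i - 2 * (B G ξ₀ (uR k) / B G (uR k) (uR k)) * uR k i with hF
      have hFtend : Tendsto F atTop (𝓝 ξ) := by
        refine tendsto_pi_nhds.mpr fun i => ?_
        have hxi : ξ i = ξ₀ i - 2 * (B G ξ₀ (fun i => ξ i - ξ₀ i)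
            / B G (fun i => ξ i - ξ₀ i) (fun i => ξ i - ξ₀ i)) * (ξ i - ξ₀ i) := by
          have hr : 2 * (B G ξ₀ (fun i => ξ i - ξ₀ i)
              / B G (fun i => ξ i - ξ₀ i) (fun i => ξ i - ξ₀ i)) = -1 := by
            rw [hkey]
            field_simp
          rw [hr]; ring
        rw [hxi]
        exact tendsto_const_nhds.sub
          ((tendsto_const_nhds.mul (hc2.div hc1 hBww)).mul (hti i))
      have hmem : ∀ᶠ k in atTop, F k ∈ {ζ : Fin ρ → ℝ |
          (∃ x : Fin ρ → ℚ, ζ = fun i => Real.sqrt (m : ℝ) * (x i : ℝ)) ∧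
          ipR ζ ζ = 2 * (ℓ : ℝ)} := by
        filter_upwards [hev] with k hk
        have e2 : B G (uR k) (uR k) = ((Bq G (u k) (u k) : ℚ) : ℝ) :=
          QlmAux.B_cast G (u k) (u k)
        have e1 : B G ξ₀ (uR k) = Real.sqrt (m:ℝ) * ((Bq G x₀ (u k) : ℚ) : ℝ) := by
          rw [hξ₀, QlmAux.B_smul_left]
          congr 1
          exact QlmAux.B_cast G x₀ (u k)
        constructor
        · refine ⟨fun i => x₀ i - 2 * (Bq G x₀ (u k) / Bq G (u k) (u k)) * u k i, ?_⟩
          funext i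
          show ξ₀ i - 2 * (B G ξ₀ (uR k) / B G (uR k) (uR k)) * uR k i = _
          rw [e1, e2, hξ₀]
          have hq0 : ((Bq G (u k) (u k) : ℚ) : ℝ) ≠ 0 := by rw [← e2]; exact hk
          have hq0' : (Bq G (u k) (u k) : ℚ) ≠ 0 := by exact_mod_cast hq0
          push_cast [hq0']
          show Real.sqrt (m:ℝ) * (x₀ i : ℝ) - _ = _
          ring
        · show ipR (F k) (F k) = 2 * (ℓ:ℝ)
          rw [hB]
          have hexp := QlmAux.B_sub_smul hGsymm ξ₀ (uR k)
            (2 * (B G ξ₀ (uR k) / B G (uR k) (uR k)))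
          have : B G (F k) (F k) = B G ξ₀ ξ₀
              - 2 * (2 * (B G ξ₀ (uR k) / B G (uR k) (uR k))) * B G ξ₀ (uR k)
              + (2 * (B G ξ₀ (uR k) / B G (uR k) (uR k))) ^ 2 * B G (uR k) (uR k) := hexp
          rw [this, hBξ₀]
          field_simp
          ring
      exact mem_closure_of_tendsto hFtend hmem
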